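/- Let n = 4a + b, where a ≥ 0 and 0 ≤ b ≤ 3 are integers. Then ex(n, P_5) = 6a + b(b−1)/2. -/

import Mathlib

/-- `G` contains the path on `t` vertices as a subgraph. -/
def ContainsPath (t : ℕ) {V : Type*} (G : SimpleGraph V) : Prop :=
  ∃ f : Fin t → V, Function.Injective f ∧
    ∀ i j : Fin t, (i : ℕ) + 1 = (j : ℕ) → G.Adj (f i) (f j)

/-- The graph on `Fin n` formed by the edges of colour `c`. -/
def colorClass {n r : ℕ} (C : Sym2 (Fin n) → Fin r) (c : Fin r) : SimpleGraph (Fin n) :=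
  SimpleGraph.fromEdgeSet {e | C e = c}

/-- The colouring `C` contains a monochromatic path on `t` vertices. -/
def HasMonoPath (t : ℕ) {n r : ℕ} (C : Sym2 (Fin n) → Fin r) : Prop :=
  ∃ c : Fin r, ContainsPath t (colorClass C c)

/-- The `r`-coloured Ramsey number of the path on `t` vertices. -/
noncomputable def pathRamsey (r t : ℕ) : ℕ :=
  sInf {n | ∀ C : Sym2 (Fin n) → Fin r, HasMonoPath t C}

/-- The Turán number of the path on `t` vertices. -/
noncomputable def exPath (t n : ℕ) : ℕ :=
  sSup {m | ∃ G : SimpleGraph (Fin n), ¬ ContainsPath t G ∧ G.edgeSet.ncard = m}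

section Aux
open Finset

def gval (n : ℕ) : ℕ := 6 * (n / 4) + n % 4 * (n % 4 - 1) / 2

lemma gval_superadd (x y : ℕ) : gval x + gval y ≤ gval (x + y) := by
  unfold gval
  have hx : x % 4 < 4 := by omega
  have hy : y % 4 < 4 := by omega
  have hxy : (x + y) % 4 < 4 := by omega
  set r := x % 4 with hr
  set t := y % 4 with ht
  set u := (x + y) % 4 with hu
  interval_cases r <;> interval_cases t <;> interval_cases u <;> omega

lemma gval_ge_self {n : ℕ} (h : 5 ≤ n) : n ≤ gval n := by
  unfold gval
  have hx : n % 4 < 4 := by omega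
  set r := n % 4 with hr
  interval_cases r <;> omega

lemma gval_base {k : ℕ} (h : k ≤ 4) : k * (k - 1) / 2 ≤ gval k := by
  interval_cases k <;> decide

lemma not_containsPath_five {W : Type*} {G : SimpleGraph W} (hG : ¬ ContainsPath 5 G)
    {a b c d e : W} (h1 : G.Adj a b) (h2 : G.Adj b c) (h3 : G.Adj c d) (h4 : G.Adj d e)
    (hac : a ≠ c) (had : a ≠ d) (hae : a ≠ e) (hbd : b ≠ d) (hbe : b ≠ e) (hce : c ≠ e) :
    False := by
  apply hG
  have hab := h1.ne
  have hbc := h2.ne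
  have hcd := h3.ne
  have hde := h4.ne
  refine ⟨![a, b, c, d, e], ?_, ?_⟩
  · intro i j hij
    fin_cases i <;> fin_cases j <;> simp_all
  · intro i j hij
    fin_cases i <;> fin_cases j <;> simp_all

variable {V : Type*} [Fintype V] [DecidableEq V]

def restr (G : SimpleGraph V) (s : Finset V) : SimpleGraph V where
  Adj a b := G.Adj a b ∧ a ∈ s ∧ b ∈ s
  symm := ⟨fun a b h => ⟨h.1.symm, h.2.2, h.2.1⟩⟩
  loopless := ⟨fun a h => G.loopless.irrefl a h.1⟩

@[simp] lemma restr_adj {G : SimpleGraph V} {s : Finset V} {a b : V} :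
    (restr G s).Adj a b ↔ G.Adj a b ∧ a ∈ s ∧ b ∈ s := Iff.rfl

instance {G : SimpleGraph V} [DecidableRel G.Adj] {s : Finset V} :
    DecidableRel (restr G s).Adj :=
  fun a b => inferInstanceAs (Decidable (G.Adj a b ∧ a ∈ s ∧ b ∈ s))

lemma restr_univ (G : SimpleGraph V) : restr G univ = G := by
  ext a b; simp

/-- handshake-style bound for graphs supported on `s` with degrees bounded by `D`. -/
lemma two_mul_ecard_le (H : SimpleGraph V) [DecidableRel H.Adj] (s : Finset V)
    (hsupp : ∀ a b, H.Adj a b → a ∈ s) (D : ℕ) (hdeg : ∀ v ∈ s, H.degree v ≤ D) :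
    2 * H.edgeFinset.card ≤ s.card * D := by
  rw [← SimpleGraph.sum_degrees_eq_twice_card_edges]
  have h0 : ∀ v ∈ (univ : Finset V), v ∉ s → H.degree v = 0 := by
    intro v _ hv
    rw [← SimpleGraph.card_neighborFinset_eq_degree, card_eq_zero]
    ext b
    simp only [SimpleGraph.mem_neighborFinset, notMem_empty, iff_false]
    exact fun h => hv (hsupp _ _ h)
  rw [← Finset.sum_subset (subset_univ s) h0]
  exact Finset.sum_le_card_nsmul s _ D hdeg

lemma restr_degree_le {G : SimpleGraph V} [DecidableRel G.Adj] {s : Finset V} {v : V} :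
    (restr G s).degree v ≤ s.card - 1 := by
  by_cases hv : v ∈ s
  · rw [← SimpleGraph.card_neighborFinset_eq_degree]
    have hsub : (restr G s).neighborFinset v ⊆ s.erase v := by
      intro b hb
      simp only [SimpleGraph.mem_neighborFinset, restr_adj] at hb
      exact mem_erase.2 ⟨fun h => G.loopless.irrefl v (h ▸ hb.1), hb.2.2⟩
    calc ((restr G s).neighborFinset v).card ≤ (s.erase v).card := card_le_card hsub
      _ = s.card - 1 := card_erase_of_mem hv
  · have : (restr G s).degree v = 0 := by
      rw [← SimpleGraph.card_neighborFinset_eq_degree, card_eq_zero]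
      ext b
      simp only [SimpleGraph.mem_neighborFinset, restr_adj, notMem_empty, iff_false]
      exact fun h => hv h.2.1
    omega

lemma restr_ecard_base {G : SimpleGraph V} [DecidableRel G.Adj] {s : Finset V} :
    2 * (restr G s).edgeFinset.card ≤ s.card * (s.card - 1) :=
  two_mul_ecard_le (restr G s) s (fun a b (h : (restr G s).Adj a b) => h.2.1) _
    (fun v _ => restr_degree_le)

lemma ball_lemma (G : SimpleGraph V) [DecidableRel G.Adj] (hG : ¬ ContainsPath 5 G)
    (s : Finset V) (v : V) (hv : 3 ≤ (restr G s).degree v) :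
    ∃ S : Finset V, S ⊆ s ∧ S.Nonempty ∧
      (∀ a b, a ∈ S → (restr G s).Adj a b → b ∈ S) ∧
      (restr G S).edgeFinset.card ≤ gval S.card := by
  set Gs := restr G s with hGs
  set N := Gs.neighborFinset v with hN
  have hdN : 3 ≤ N.card := by
    rwa [hN, SimpleGraph.card_neighborFinset_eq_degree]
  have hNadj : ∀ u ∈ N, Gs.Adj v u := fun u hu => (SimpleGraph.mem_neighborFinset _ _ _).1 hu
  have hGadj : ∀ a b, Gs.Adj a b → G.Adj a b := fun _ _ h => h.1
  have hvs : v ∈ s := by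
    obtain ⟨u, hu⟩ : N.Nonempty := card_pos.1 (by omega)
    exact (hNadj u hu).2.1
  set S := s.filter (fun w => w = v ∨ Gs.Adj v w ∨ ∃ u, Gs.Adj v u ∧ Gs.Adj u w) with hSdef
  set P := S.filter (fun w => w ≠ v ∧ ¬ Gs.Adj v w) with hPdef
  have hSs : S ⊆ s := filter_subset _ _
  have hvS : v ∈ S := mem_filter.2 ⟨hvs, Or.inl rfl⟩
  have hNS : ∀ u ∈ N, u ∈ S := fun u hu =>
    mem_filter.2 ⟨(hNadj u hu).2.2, Or.inr (Or.inl (hNadj u hu))⟩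
  have hPv : ∀ p ∈ P, p ≠ v := fun p hp => (mem_filter.1 hp).2.1
  have hPN : ∀ p ∈ P, ¬ Gs.Adj v p := fun p hp => (mem_filter.1 hp).2.2
  have hPS : P ⊆ S := filter_subset _ _
  have hPattach : ∀ p ∈ P, ∃ u ∈ N, Gs.Adj u p := by
    intro p hp
    have h1 := (mem_filter.1 (hPS hp)).2
    rcases h1 with h | h | ⟨u, h1, h2⟩
    · exact absurd h (hPv p hp)
    · exact absurd h (hPN p hp)
    · exact ⟨u, (SimpleGraph.mem_neighborFinset _ _ _).2 h1, h2⟩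
  have hNP : ∀ w ∈ S, w ≠ v → w ∈ N ∨ w ∈ P := by
    intro w hw h1
    by_cases h2 : Gs.Adj v w
    · exact Or.inl ((SimpleGraph.mem_neighborFinset _ _ _).2 h2)
    · exact Or.inr (mem_filter.2 ⟨hw, h1, h2⟩)
  have hpick2 : ∀ a b : V, ∃ q ∈ N, q ≠ a ∧ q ≠ b := by
    intro a b
    have h1 : 0 < (N \ {a, b}).card := by
      have h2 := Finset.le_card_sdiff ({a, b} : Finset V) N
      have h3 : ({a, b} : Finset V).card ≤ 2 := card_insert_le _ _ |>.trans (by simp)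
      omega
    obtain ⟨q, hq⟩ := card_pos.1 h1
    rcases mem_sdiff.1 hq with ⟨hqN, hq2⟩
    simp only [mem_insert, mem_singleton, not_or] at hq2
    exact ⟨q, hqN, hq2.1, hq2.2⟩
  have hpick3 : 4 ≤ N.card → ∀ a b c : V, ∃ q ∈ N, q ≠ a ∧ q ≠ b ∧ q ≠ c := by
    intro h4 a b c
    have h1 : 0 < (N \ {a, b, c}).card := by
      have h2 := Finset.le_card_sdiff ({a, b, c} : Finset V) N
      have h3 : ({a, b, c} : Finset V).card ≤ 3 := by
        have := card_insert_le a ({b, c} : Finset V)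
        have := card_insert_le b ({c} : Finset V)
        simp at *
        omega
      omega
    obtain ⟨q, hq⟩ := card_pos.1 h1
    rcases mem_sdiff.1 hq with ⟨hqN, hq2⟩
    simp only [mem_insert, mem_singleton, not_or] at hq2
    exact ⟨q, hqN, hq2.1, hq2.2.1, hq2.2.2⟩
  have hNnotv : ∀ u ∈ N, u ≠ v := fun u hu => (hNadj u hu).ne'
  -- closure of S under Gs-adjacency
  have hclosed : ∀ a b, a ∈ S → Gs.Adj a b → b ∈ S := by
    intro a b haS hab
    have hbs : b ∈ s := hab.2.2
    by_cases hbv : b = v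
    · exact hbv ▸ hvS
    by_cases hvb : Gs.Adj v b
    · exact hNS b ((SimpleGraph.mem_neighborFinset _ _ _).2 hvb)
    refine mem_filter.2 ⟨hbs, ?_⟩
    by_cases hav : a = v
    · exact Or.inr (Or.inl (hav ▸ hab))
    by_cases hva : Gs.Adj v a
    · exact Or.inr (Or.inr ⟨a, hva, hab⟩)
    exfalso
    rcases (mem_filter.1 haS).2 with h | h | ⟨u, hvu, hua⟩
    · exact hav h
    · exact hva h
    obtain ⟨q, hqN, hqu, -⟩ := hpick2 u u
    have hvq := hNadj q hqN
    refine not_containsPath_five hG (a := b) (b := a) (c := u) (d := v) (e := q)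
      (hGadj _ _ hab).symm (hGadj _ _ hua).symm (hGadj _ _ hvu).symm (hGadj _ _ hvq)
      ?_ ?_ ?_ ?_ ?_ ?_
    · exact fun h => hvb (h ▸ hvu)
    · exact hbv
    · exact fun h => hvb (h ▸ hvq)
    · exact hav
    · exact fun h => hva (h ▸ hvq)
    · exact fun h => hqu (h.symm)
  refine ⟨S, hSs, ⟨v, hvS⟩, hclosed, ?_⟩
  by_cases hm4 : S.card ≤ 4
  · have h2 := restr_ecard_base (G := G) (s := S)
    have h3 := gval_base hm4
    omega
  -- main counting
  push_neg at hm4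
  -- decomposition of S
  have hSunion : S = insert v (N ∪ P) := by
    ext w
    simp only [mem_insert, mem_union]
    constructor
    · intro hw
      by_cases h1 : w = v
      · exact Or.inl h1
      · exact Or.inr (hNP w hw h1)
    · rintro (rfl | h | h)
      · exact hvS
      · exact hNS w h
      · exact hPS h
  have hvnotNP : v ∉ N ∪ P := by
    simp only [mem_union, not_or]
    exact ⟨fun h => (hNnotv v h) rfl, fun h => (hPv v h) rfl⟩
  have hNPdisj : Disjoint N P := by
    rw [disjoint_left]
    intro w hw hwP
    exact hPN w hwP (hNadj w hw)
  have hScard : S.card = 1 + N.card + P.card := by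
    rw [hSunion, card_insert_of_notMem hvnotNP, card_union_of_disjoint hNPdisj]
    omega
  set GS := restr G S with hGSdef
  have hGSadj : ∀ a b, GS.Adj a b → Gs.Adj a b := fun a b h => ⟨h.1, hSs h.2.1, hSs h.2.2⟩
  have hGSG : ∀ a b, GS.Adj a b → G.Adj a b := fun a b h => h.1
  set E := GS.edgeFinset with hE
  set E1 := E.filter (fun e => v ∈ e) with hE1
  set E2 := E.filter (fun e => ¬ v ∈ e) with hE2
  have hEsplit : E1.card + E2.card = E.card := card_filter_add_card_filter_not _
  have hE1card : E1.card = N.card := by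
    have h1 : E1 = GS.incidenceFinset v := by
      ext e
      simp only [hE1, hE, mem_filter, SimpleGraph.mem_incidenceFinset, SimpleGraph.incidenceSet,
        SimpleGraph.mem_edgeFinset, Set.mem_sep_iff]
    rw [h1, SimpleGraph.card_incidenceFinset_eq_degree,
      ← SimpleGraph.card_neighborFinset_eq_degree]
    congr 1
    ext u
    simp only [SimpleGraph.mem_neighborFinset]
    constructor
    · intro h
      exact (SimpleGraph.mem_neighborFinset _ _ _).2 (hGSadj _ _ h)
    · intro hu
      exact ⟨(hNadj u hu).1, hvS, hNS u hu⟩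
  have hrep : ∀ e ∈ E2, ∃ x y, e = s(x, y) ∧ GS.Adj x y ∧ x ≠ v ∧ y ≠ v := by
    intro e
    induction e using Sym2.ind with
    | _ x y =>
      intro he
      rcases mem_filter.1 he with ⟨heE, hve⟩
      rw [hE, SimpleGraph.mem_edgeFinset, SimpleGraph.mem_edgeSet] at heE
      simp only [Sym2.mem_iff, not_or] at hve
      exact ⟨x, y, rfl, heE, fun h => hve.1 h.symm, fun h => hve.2 h.symm⟩
  have no_PP : ∀ p₁ ∈ P, ∀ p₂ ∈ P, ¬ G.Adj p₁ p₂ := by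
    intro p₁ hp₁ p₂ hp₂ hadj
    obtain ⟨u, huN, hup⟩ := hPattach p₁ hp₁
    obtain ⟨q, hqN, hqu, -⟩ := hpick2 u u
    refine not_containsPath_five hG (a := p₂) (b := p₁) (c := u) (d := v) (e := q)
      hadj.symm (hGadj _ _ hup).symm (hGadj _ _ (hNadj u huN)).symm (hGadj _ _ (hNadj q hqN))
      ?_ ?_ ?_ ?_ ?_ ?_
    · exact fun h => hPN p₂ hp₂ (by rw [h]; exact hNadj u huN)
    · exact hPv p₂ hp₂
    · exact fun h => hPN p₂ hp₂ (by rw [h]; exact hNadj q hqN)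
    · exact hPv p₁ hp₁
    · exact fun h => hPN p₁ hp₁ (by rw [h]; exact hNadj q hqN)
    · exact fun h => hqu h.symm
  have hPnotN : ∀ p ∈ P, ∀ z ∈ N, p ≠ z :=
    fun p hp z hz h => hPN p hp (by rw [h]; exact hNadj z hz)
  have single_attach : ∀ p ∈ P, ∀ x₁ ∈ N, ∀ x₂ ∈ N, x₁ ≠ x₂ →
      G.Adj p x₁ → G.Adj p x₂ → False := by
    intro p hp x₁ h₁ x₂ h₂ hne e₁ e₂
    obtain ⟨q, hqN, hq1, hq2⟩ := hpick2 x₁ x₂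
    exact not_containsPath_five hG (a := x₁) (b := p) (c := x₂) (d := v) (e := q)
      e₁.symm e₂ (hGadj _ _ (hNadj x₂ h₂)).symm (hGadj _ _ (hNadj q hqN))
      hne (hNnotv x₁ h₁) (fun h => hq1 h.symm) (hPv p hp) (hPnotN p hp q hqN)
      (fun h => hq2 h.symm)
  have no_NN_P : P.Nonempty → ∀ x ∈ N, ∀ y ∈ N, x ≠ y → ¬ G.Adj x y := by
    rintro ⟨p, hp⟩ x hx y hy hxy hadj
    obtain ⟨u, huN, hup⟩ := hPattach p hp
    by_cases hux : u = x
    · obtain ⟨q, hqN, hq1, hq2⟩ := hpick2 x y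
      exact not_containsPath_five hG (a := p) (b := x) (c := y) (d := v) (e := q)
        (by rw [← hux]; exact (hGadj _ _ hup).symm) hadj
        (hGadj _ _ (hNadj y hy)).symm (hGadj _ _ (hNadj q hqN))
        (hPnotN p hp y hy) (hPv p hp) (hPnotN p hp q hqN) (hNnotv x hx)
        (fun h => hq1 h.symm) (fun h => hq2 h.symm)
    · by_cases huy : u = y
      · obtain ⟨q, hqN, hq1, hq2⟩ := hpick2 x y
        exact not_containsPath_five hG (a := p) (b := y) (c := x) (d := v) (e := q)
          (by rw [← huy]; exact (hGadj _ _ hup).symm) hadj.symm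
          (hGadj _ _ (hNadj x hx)).symm (hGadj _ _ (hNadj q hqN))
          (hPnotN p hp x hx) (hPv p hp) (hPnotN p hp q hqN) (hNnotv y hy)
          (fun h => hq2 h.symm) (fun h => hq1 h.symm)
      · exact not_containsPath_five hG (a := p) (b := u) (c := v) (d := x) (e := y)
          (hGadj _ _ hup).symm (hGadj _ _ (hNadj u huN)).symm (hGadj _ _ (hNadj x hx)) hadj
          (hPv p hp) (hPnotN p hp x hx) (hPnotN p hp y hy) hux huy
          (fun h => (hNnotv y hy) h.symm)
  have chain3 : 4 ≤ N.card → ∀ a ∈ N, ∀ b ∈ N, ∀ c ∈ N, a ≠ b → a ≠ c → b ≠ c →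
      G.Adj a b → G.Adj b c → False := by
    intro h4 a ha b hb c hc hab hac hbc e1 e2
    obtain ⟨q, hqN, hq1, hq2, hq3⟩ := hpick3 h4 a b c
    exact not_containsPath_five hG (a := a) (b := b) (c := c) (d := v) (e := q)
      e1 e2 (hGadj _ _ (hNadj c hc)).symm (hGadj _ _ (hNadj q hqN))
      hac (hNnotv a ha) (fun h => hq1 h.symm) (hNnotv b hb) (fun h => hq2 h.symm)
      (fun h => hq3 h.symm)
  have disj2 : ∀ a ∈ N, ∀ b ∈ N, ∀ c ∈ N, ∀ d ∈ N, b ≠ c → b ≠ d → a ≠ c → a ≠ d →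
      G.Adj a b → G.Adj c d → False := by
    intro a ha b hb c hc d hd h1 h2 h3 h4 e1 e2
    exact not_containsPath_five hG (a := b) (b := a) (c := v) (d := c) (e := d)
      e1.symm (hGadj _ _ (hNadj a ha)).symm (hGadj _ _ (hNadj c hc)) e2
      (hNnotv b hb) h1 h2 h3 h4 (fun h => (hNnotv d hd) h.symm)
  set E2P := E2.filter (fun e => ∃ p ∈ P, p ∈ e) with hE2Pd
  set E2N := E2.filter (fun e => ¬ ∃ p ∈ P, p ∈ e) with hE2Nd
  have hE2split : E2P.card + E2N.card = E2.card := card_filter_add_card_filter_not _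
  have hE2Nform : ∀ e ∈ E2N, ∃ x y, e = s(x, y) ∧ x ∈ N ∧ y ∈ N ∧ x ≠ y ∧ G.Adj x y := by
    intro e he
    rcases mem_filter.1 he with ⟨he2, hnp⟩
    obtain ⟨x, y, rfl, hadj, hxv, hyv⟩ := hrep e he2
    have hxS : x ∈ S := hadj.2.1
    have hyS : y ∈ S := hadj.2.2
    have hxN : x ∈ N := by
      rcases hNP x hxS hxv with h | h
      · exact h
      · exact absurd ⟨x, h, Sym2.mem_iff.2 (Or.inl rfl)⟩ hnp
    have hyN : y ∈ N := by
      rcases hNP y hyS hyv with h | h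
      · exact h
      · exact absurd ⟨y, h, Sym2.mem_iff.2 (Or.inr rfl)⟩ hnp
    exact ⟨x, y, rfl, hxN, hyN, hadj.ne, hGSG _ _ hadj⟩
  have hE2Nempty : P.Nonempty → E2N = ∅ := by
    intro hPne
    rw [eq_empty_iff_forall_notMem]
    intro e he
    obtain ⟨x, y, rfl, hxN, hyN, hxy, hadj⟩ := hE2Nform e he
    exact no_NN_P hPne x hxN y hyN hxy hadj
  have hE2None : P = ∅ → E2N.card ≤ 1 := by
    intro hPe
    have hPc : P.card = 0 := by rw [hPe]; rfl
    have h4 : 4 ≤ N.card := by omega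
    rw [card_le_one]
    intro e1 h1 e2 h2
    obtain ⟨x, y, hxy_eq, hxN, hyN, hxy, hadjxy⟩ := hE2Nform e1 h1
    obtain ⟨z, w, hzw_eq, hzN, hwN, hzw, hadjzw⟩ := hE2Nform e2 h2
    by_contra hne
    by_cases hxz : x = z
    · subst hxz
      have hyw : y ≠ w := fun h => hne (by rw [hxy_eq, hzw_eq, h])
      exact chain3 h4 y hyN x hxN w hwN hxy.symm hyw hzw hadjxy.symm hadjzw
    · by_cases hxw : x = w
      · subst hxw
        have hyz : y ≠ z := fun h => hne (by rw [hxy_eq, hzw_eq, ← h, Sym2.eq_swap])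
        exact chain3 h4 y hyN x hxN z hzN hxy.symm hyz (fun h => hxz h) hadjxy.symm hadjzw.symm
      · by_cases hyz : y = z
        · subst hyz
          exact chain3 h4 x hxN y hyN w hwN hxy hxw hzw hadjxy hadjzw
        · by_cases hyw : y = w
          · subst hyw
            exact chain3 h4 x hxN y hyN z hzN hxy hxz (fun h => hzw h.symm) hadjxy hadjzw.symm
          · exact disj2 x hxN y hyN z hzN w hwN hyz hyw hxz hxw hadjxy hadjzw
  have hE2Pform : ∀ e ∈ E2P, ∀ p ∈ P, p ∈ e → ∃ x ∈ N, e = s(p, x) ∧ G.Adj p x := by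
    intro e he p hp hpe
    obtain ⟨x, y, rfl, hadj, hxv, hyv⟩ := hrep e (mem_filter.1 he).1
    have hxS : x ∈ S := hadj.2.1
    have hyS : y ∈ S := hadj.2.2
    rcases Sym2.mem_iff.1 hpe with rfl | rfl
    · rcases hNP y hyS hyv with h | h
      · exact ⟨y, h, rfl, hGSG _ _ hadj⟩
      · exact absurd (hGSG _ _ hadj) (no_PP p hp y h)
    · rcases hNP x hxS hxv with h | h
      · exact ⟨x, h, Sym2.eq_swap, (hGSG _ _ hadj).symm⟩
      · exact absurd (hGSG _ _ hadj).symm (no_PP p hp x h)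
  have hE2Pcard : E2P.card ≤ P.card := by
    have hex : ∀ e ∈ E2P, ∃ p, p ∈ P ∧ p ∈ e := by
      intro e he
      obtain ⟨p, hp1, hp2⟩ := (mem_filter.1 he).2
      exact ⟨p, hp1, hp2⟩
    refine Finset.card_le_card_of_injOn
      (fun e => if h : ∃ p, p ∈ P ∧ p ∈ e then h.choose else v) ?_ ?_
    · intro e he
      dsimp only
      rw [dif_pos (hex e he)]
      exact (hex e he).choose_spec.1
    · intro e1 h1 e2 h2 heq
      rw [mem_coe] at h1 h2
      dsimp only at heq
      rw [dif_pos (hex e1 h1), dif_pos (hex e2 h2)] at heq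
      obtain ⟨hp1, hpe1⟩ := (hex e1 h1).choose_spec
      obtain ⟨hp2, hpe2⟩ := (hex e2 h2).choose_spec
      rw [← heq] at hp2 hpe2
      obtain ⟨x1, hx1, he1eq, hadj1⟩ := hE2Pform e1 h1 _ hp1 hpe1
      obtain ⟨x2, hx2, he2eq, hadj2⟩ := hE2Pform e2 h2 _ hp1 hpe2
      by_cases hx : x1 = x2
      · rw [he1eq, he2eq, hx]
      · exact absurd hadj2 (fun hh => single_attach _ hp1 x1 hx1 x2 hx2 hx hadj1 hh)
  rcases P.eq_empty_or_nonempty with hPe | hPne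
  · have hPc : P.card = 0 := by rw [hPe]; rfl
    have hN1 := hE2None hPe
    have hcard : E.card ≤ S.card := by omega
    exact hcard.trans (gval_ge_self (by omega))
  · have hN0 : E2N.card = 0 := by rw [hE2Nempty hPne]; rfl
    have hcard : E.card ≤ S.card := by omega
    exact hcard.trans (gval_ge_self (by omega))

lemma edge_partition (G : SimpleGraph V) [DecidableRel G.Adj] (s S : Finset V) (hSs : S ⊆ s)
    (hclosed : ∀ a b, a ∈ S → (restr G s).Adj a b → b ∈ S) :
    (restr G s).edgeFinset.card
      = (restr G S).edgeFinset.card + (restr G (s \ S)).edgeFinset.card := by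
  have hdisj : Disjoint (restr G S).edgeFinset (restr G (s \ S)).edgeFinset := by
    rw [disjoint_left]
    intro e
    induction e using Sym2.ind with
    | _ a b =>
      intro he1 he2
      rw [SimpleGraph.mem_edgeFinset, SimpleGraph.mem_edgeSet] at he1 he2
      exact (mem_sdiff.1 he2.2.1).2 he1.2.1
  have hunion : (restr G s).edgeFinset
      = (restr G S).edgeFinset ∪ (restr G (s \ S)).edgeFinset := by
    ext e
    induction e using Sym2.ind with
    | _ a b =>
      simp only [mem_union, SimpleGraph.mem_edgeFinset, SimpleGraph.mem_edgeSet, restr_adj,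
        mem_sdiff]
      constructor
      · rintro ⟨hab, has, hbs⟩
        by_cases haS : a ∈ S
        · exact Or.inl ⟨hab, haS, hclosed a b haS ⟨hab, has, hbs⟩⟩
        · refine Or.inr ⟨hab, ⟨has, haS⟩, ⟨hbs, ?_⟩⟩
          intro hbS
          exact haS (hclosed b a hbS ⟨hab.symm, hbs, has⟩)
      · rintro (⟨hab, haS, hbS⟩ | ⟨hab, ⟨has, _⟩, ⟨hbs, _⟩⟩)
        · exact ⟨hab, hSs haS, hSs hbS⟩
        · exact ⟨hab, has, hbs⟩
  rw [hunion, card_union_of_disjoint hdisj]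

lemma upper_bound (G : SimpleGraph V) [DecidableRel G.Adj] (hG : ¬ ContainsPath 5 G)
    (s : Finset V) : (restr G s).edgeFinset.card ≤ gval s.card := by
  induction s using Finset.strongInduction with
  | _ s ih =>
    by_cases hcase : ∃ v, 3 ≤ (restr G s).degree v
    · obtain ⟨v, hv⟩ := hcase
      obtain ⟨S, hSs, hSne, hclosed, hScard⟩ := ball_lemma G hG s v hv
      have hpart := edge_partition G s S hSs hclosed
      have hrec := ih (s \ S) (Finset.sdiff_ssubset hSs hSne)
      have hsum := gval_superadd S.card (s \ S).card
      have hc : (s \ S).card = s.card - S.card := card_sdiff_of_subset hSs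
      have hle : S.card ≤ s.card := card_le_card hSs
      have heq : S.card + (s \ S).card = s.card := by omega
      rw [heq] at hsum
      omega
    · push_neg at hcase
      by_cases hk : s.card ≤ 4
      · have h1 := restr_ecard_base (G := G) (s := s)
        have h2 := gval_base hk
        omega
      · have h1 := two_mul_ecard_le (restr G s) s (fun a b (h : (restr G s).Adj a b) => h.2.1) 2
          (fun v _ => by have := hcase v; omega)
        have h2 := gval_ge_self (n := s.card) (by omega)
        omega

lemma upper_ncard (G : SimpleGraph V) (hG : ¬ ContainsPath 5 G) :
    G.edgeSet.ncard ≤ gval (Fintype.card V) := by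
  classical
  have hset : G.edgeSet = (restr G univ).edgeSet := by
    ext e
    induction e using Sym2.ind with
    | _ a b => simp [SimpleGraph.mem_edgeSet]
  calc G.edgeSet.ncard = (restr G univ).edgeSet.ncard := by rw [hset]
    _ = (restr G univ).edgeFinset.card := Set.ncard_eq_toFinset_card' _
    _ ≤ gval (univ : Finset V).card := upper_bound G hG univ
    _ = gval (Fintype.card V) := by rw [card_univ]

def blocks (n : ℕ) : SimpleGraph (Fin n) where
  Adj x y := x ≠ y ∧ (x : ℕ) / 4 = (y : ℕ) / 4
  symm := by
    refine ⟨fun x y h => ?_⟩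
    exact ⟨h.1.symm, h.2.symm⟩
  loopless := ⟨fun x h => h.1 rfl⟩

instance blocks_dec {n : ℕ} : DecidableRel (blocks n).Adj :=
  fun x y => inferInstanceAs (Decidable (x ≠ y ∧ (x : ℕ) / 4 = (y : ℕ) / 4))

lemma blocks_free (n : ℕ) : ¬ ContainsPath 5 (blocks n) := by
  rintro ⟨f, hinj, hadj⟩
  have h01 := (hadj 0 1 (by decide)).2
  have h12 := (hadj 1 2 (by decide)).2
  have h23 := (hadj 2 3 (by decide)).2
  have h34 := (hadj 3 4 (by decide)).2
  have hne : ∀ i j : Fin 5, i ≠ j → ((f i : Fin n) : ℕ) ≠ ((f j : Fin n) : ℕ) := by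
    intro i j hij h
    exact hij (hinj (Fin.val_injective h))
  have d01 := hne 0 1 (by decide)
  have d02 := hne 0 2 (by decide)
  have d03 := hne 0 3 (by decide)
  have d04 := hne 0 4 (by decide)
  have d12 := hne 1 2 (by decide)
  have d13 := hne 1 3 (by decide)
  have d14 := hne 1 4 (by decide)
  have d23 := hne 2 3 (by decide)
  have d24 := hne 2 4 (by decide)
  have d34 := hne 3 4 (by decide)
  omega

lemma blocks_count (a b : ℕ) (hb : b ≤ 3) :
    (blocks (4 * a + b)).edgeSet.ncard = 6 * a + b * (b - 1) / 2 := by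
  set n := 4 * a + b with hn
  have hcard : ∀ x : Fin n, (blocks n).degree x = (if (x : ℕ) < 4 * a then 4 else b) - 1 := by
    intro x
    rw [← SimpleGraph.card_neighborFinset_eq_degree]
    have hnb : (blocks n).neighborFinset x
        = (univ.filter (fun y : Fin n => (y : ℕ) / 4 = (x : ℕ) / 4)).erase x := by
      ext y
      simp only [SimpleGraph.mem_neighborFinset, mem_erase, mem_filter, mem_univ, true_and]
      constructor
      · intro h
        exact ⟨fun hh => h.1 hh.symm, h.2.symm⟩
      · intro h
        exact ⟨fun hh => h.1 hh.symm, h.2.symm⟩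
    rw [hnb, card_erase_of_mem (by simp)]
    congr 1
    have himg : (univ.filter (fun y : Fin n => (y : ℕ) / 4 = (x : ℕ) / 4)).image Fin.val
        = Finset.Ico (4 * ((x : ℕ) / 4)) (min (4 * ((x : ℕ) / 4) + 4) n) := by
      ext m
      simp only [mem_image, mem_filter, mem_univ, true_and, mem_Ico]
      constructor
      · rintro ⟨y, hy, rfl⟩
        have := y.isLt
        omega
      · intro hm
        have hmn : m < n := by omega
        refine ⟨⟨m, hmn⟩, ?_, rfl⟩
        show m / 4 = (x : ℕ) / 4
        omega
    have hcongr := congrArg Finset.card himg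
    rw [card_image_of_injective _ Fin.val_injective] at hcongr
    rw [hcongr, Nat.card_Ico]
    have hx := x.isLt
    by_cases hcase : (x : ℕ) < 4 * a
    · rw [if_pos hcase]; omega
    · rw [if_neg hcase]; omega
  have hsum := SimpleGraph.sum_degrees_eq_twice_card_edges (blocks n)
  rw [Finset.sum_congr rfl (fun x _ => hcard x)] at hsum
  rw [← Finset.sum_filter_add_sum_filter_not univ (fun x : Fin n => (x : ℕ) < 4 * a)] at hsum
  have hc1 : (univ.filter (fun x : Fin n => (x : ℕ) < 4 * a)).card = 4 * a := by
    have himg : (univ.filter (fun x : Fin n => (x : ℕ) < 4 * a)).image Fin.val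
        = Finset.range (4 * a) := by
      ext m
      simp only [mem_image, mem_filter, mem_univ, true_and, mem_range]
      constructor
      · rintro ⟨y, hy, rfl⟩
        exact hy
      · intro hm
        exact ⟨⟨m, by omega⟩, hm, rfl⟩
    have hcongr := congrArg Finset.card himg
    rw [card_image_of_injective _ Fin.val_injective] at hcongr
    rw [hcongr, card_range]
  have hc2 : (univ.filter (fun x : Fin n => ¬ (x : ℕ) < 4 * a)).card = b := by
    have := card_filter_add_card_filter_not (s := (univ : Finset (Fin n)))
      (p := fun x : Fin n => (x : ℕ) < 4 * a)
    rw [card_univ, Fintype.card_fin] at this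
    omega
  have hs1 : (∑ x ∈ filter (fun x : Fin n => (x : ℕ) < 4 * a) univ,
      ((if (x : ℕ) < 4 * a then 4 else b) - 1)) = 12 * a := by
    have hcon : ∀ x ∈ filter (fun x : Fin n => (x : ℕ) < 4 * a) univ,
        ((if (x : ℕ) < 4 * a then 4 else b) - 1) = 3 := by
      intro x hx
      rw [if_pos (mem_filter.1 hx).2]
    rw [Finset.sum_congr rfl hcon, Finset.sum_const, hc1, smul_eq_mul]
    omega
  have hs2 : (∑ x ∈ filter (fun x : Fin n => ¬ (x : ℕ) < 4 * a) univ,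
      ((if (x : ℕ) < 4 * a then 4 else b) - 1)) = b * (b - 1) := by
    have hcon : ∀ x ∈ filter (fun x : Fin n => ¬ (x : ℕ) < 4 * a) univ,
        ((if (x : ℕ) < 4 * a then 4 else b) - 1) = b - 1 := by
      intro x hx
      rw [if_neg (mem_filter.1 hx).2]
    rw [Finset.sum_congr rfl hcon, Finset.sum_const, hc2, smul_eq_mul]
  rw [hs1, hs2] at hsum
  have hnc : (blocks n).edgeSet.ncard = (blocks n).edgeFinset.card :=
    Set.ncard_eq_toFinset_card' _
  rw [hnc]
  interval_cases b <;> omega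


end Aux

/-- Theorem 2.1 (Faudree–Schelp), value: `ex(4a + b, P₅) = 6a + b(b-1)/2` for `0 ≤ b ≤ 3`. -/
theorem turan_number_P5 (a b : ℕ) (hb : b ≤ 3) :
    exPath 5 (4 * a + b) = 6 * a + b * (b - 1) / 2 := by
  have hgv : gval (4 * a + b) = 6 * a + b * (b - 1) / 2 := by
    have h1 : (4 * a + b) / 4 = a := by omega
    have h2 : (4 * a + b) % 4 = b := by omega
    rw [gval, h1, h2]
  have hub : ∀ m ∈ {m | ∃ G : SimpleGraph (Fin (4 * a + b)),
      ¬ ContainsPath 5 G ∧ G.edgeSet.ncard = m}, m ≤ 6 * a + b * (b - 1) / 2 := by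
    rintro m ⟨G, hfree, hcard⟩
    have h := upper_ncard G hfree
    rw [Fintype.card_fin, hgv, hcard] at h
    exact h
  have hmem : (6 * a + b * (b - 1) / 2) ∈ {m | ∃ G : SimpleGraph (Fin (4 * a + b)),
      ¬ ContainsPath 5 G ∧ G.edgeSet.ncard = m} :=
    ⟨blocks _, blocks_free _, blocks_count a b hb⟩
  exact le_antisymm (csSup_le ⟨_, hmem⟩ hub) (le_csSup ⟨_, hub⟩ hmem)
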